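/- Let A_tor be the Lie algebra with basis {x_{a,b}}_{(a,b)∈ℤ²}, {k_{a,b}}_{(a,b)∈ℤ²∖{(0,0)}}, and central elements k_s, k_t, where x denotes d (derivation) generators, with brackets [d_{a,b}, d_{c,d}] = -(ad-bc) d_{a+c,b+d}, [d_{a,b}, k_{c,d}] = -(ad-bc) k_{a+c,b+d} + δ_{a+c,0}δ_{b+d,0}(a k_s + b k_t), and k's pairwise commuting and commuting with k_s, k_t. Then this bracket satisfies the Jacobi identity. -/

import Mathlib

/-- Coefficient functions on `ℤ²` (for the families `d_{a,b}` resp. `k_{a,b}`). -/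
abbrev TorCoef := (ℤ × ℤ) →₀ ℚ

/-- The toroidal extended affine Lie algebra of `𝔤𝔩₀`:
`⊕ ℚ d_{a,b} ⊕ ⊕ ℚ k_{a,b} ⊕ ℚ k_s ⊕ ℚ k_t` (first factor: `d`-coefficients,
second: `k`-coefficients, then the coefficients of `k_s` and `k_t`). -/
abbrev TorEALA := TorCoef × TorCoef × ℚ × ℚ

/-- The bilinear convolution implementing
`x_{a,b} ⊗ y_{c,d} ↦ -(ad-bc)·(xy)_{a+c,b+d}`. -/
noncomputable def torConv (x y : TorCoef) : TorCoef :=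
  x.sum fun p xp => y.sum fun q yq =>
    Finsupp.single (p + q) (((-(p.1 * q.2 - p.2 * q.1) : ℤ) : ℚ) * xp * yq)

/-- The central cocycle: `d_{a,b} ⊗ k_{c,d} ↦ δ_{a+c,0}δ_{b+d,0}(a k_s + b k_t)`. -/
noncomputable def torCen (x y : TorCoef) : ℚ × ℚ :=
  (x.sum fun p xp => xp * y (-p) * (p.1 : ℚ),
   x.sum fun p xp => xp * y (-p) * (p.2 : ℚ))

/-- The bracket of the toroidal extended affine Lie algebra of `𝔤𝔩₀`:
`[d_{a,b}, d_{c,d}] = -(ad-bc) d_{a+c,b+d}`,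
`[d_{a,b}, k_{c,d}] = -(ad-bc) k_{a+c,b+d} + δ_{a+c,0}δ_{b+d,0}(a k_s + b k_t)`,
with the `k`'s pairwise commuting and `k_s, k_t` central. -/
noncomputable def torBrk (u v : TorEALA) : TorEALA :=
  (torConv u.1 v.1,
   torConv u.1 v.2.1 - torConv v.1 u.2.1,
   (torCen u.1 v.2.1).1 - (torCen v.1 u.2.1).1,
   (torCen u.1 v.2.1).2 - (torCen v.1 u.2.1).2)

lemma torConv_single_single (p q : ℤ × ℤ) (α β : ℚ) :
    torConv (Finsupp.single p α) (Finsupp.single q β)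
      = Finsupp.single (p + q) (((-(p.1 * q.2 - p.2 * q.1) : ℤ) : ℚ) * α * β) := by
  classical
  unfold torConv
  rw [Finsupp.sum_single_index, Finsupp.sum_single_index] <;> simp

lemma torConv_zero_left (y : TorCoef) : torConv 0 y = 0 := by simp [torConv]

lemma torConv_zero_right (x : TorCoef) : torConv x 0 = 0 := by simp [torConv]

lemma torConv_add_left (x x' y : TorCoef) :
    torConv (x + x') y = torConv x y + torConv x' y := by
  unfold torConv
  rw [Finsupp.sum_add_index'] <;> intros <;> simp [mul_add, add_mul, Finsupp.single_add, Finsupp.sum_add]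

lemma torConv_add_right (x y y' : TorCoef) :
    torConv x (y + y') = torConv x y + torConv x y' := by
  unfold torConv
  rw [← Finsupp.sum_add]
  congr 1; ext p xp
  rw [Finsupp.sum_add_index'] <;> intros <;> simp [mul_add, add_mul, Finsupp.single_add]

lemma torCen_single_single (p q : ℤ × ℤ) (α β : ℚ) :
    torCen (Finsupp.single p α) (Finsupp.single q β)
      = ((if q = -p then α * β * (p.1 : ℚ) else 0),
         (if q = -p then α * β * (p.2 : ℚ) else 0)) := by
  classical
  unfold torCen
  rw [Finsupp.sum_single_index, Finsupp.sum_single_index] <;>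
    simp [Finsupp.single_apply]

lemma torCen_zero_left (y : TorCoef) : torCen 0 y = 0 := by simp [torCen, Prod.ext_iff]

lemma torCen_zero_right (x : TorCoef) : torCen x 0 = 0 := by simp [torCen, Prod.ext_iff]

lemma torCen_add_left (x x' y : TorCoef) :
    torCen (x + x') y = torCen x y + torCen x' y := by
  unfold torCen
  rw [Finsupp.sum_add_index', Finsupp.sum_add_index'] <;> intros <;> simp [add_mul]

lemma torCen_add_right (x y y' : TorCoef) :
    torCen x (y + y') = torCen x y + torCen x y' := by
  unfold torCen
  simp only [Finsupp.add_apply, Prod.mk_add_mk, Prod.mk.injEq]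
  constructor <;> (rw [← Finsupp.sum_add]; congr 1; ext p xp; ring)

lemma torCen_sub_right (x y y' : TorCoef) :
    torCen x (y - y') = torCen x y - torCen x y' := by
  have h := torCen_add_right x (y - y') y'
  simp only [sub_add_cancel] at h
  rw [h]; abel

lemma torConv_sub_right (x y y' : TorCoef) :
    torConv x (y - y') = torConv x y - torConv x y' := by
  have h := torConv_add_right x (y - y') y'
  simp only [sub_add_cancel] at h
  rw [h]; abel

lemma conv_jacobi_single (p q r : ℤ × ℤ) (α β γ : ℚ) :
    torConv (torConv (Finsupp.single p α) (Finsupp.single q β)) (Finsupp.single r γ)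
    + torConv (torConv (Finsupp.single q β) (Finsupp.single r γ)) (Finsupp.single p α)
    + torConv (torConv (Finsupp.single r γ) (Finsupp.single p α)) (Finsupp.single q β) = 0 := by
  simp only [torConv_single_single]
  rw [show q + r + p = p + q + r by ring, show r + p + q = p + q + r by ring,
    ← Finsupp.single_add, ← Finsupp.single_add]
  convert Finsupp.single_zero (p + q + r)
  · rfl
  simp only [Prod.fst_add, Prod.snd_add]
  push_cast
  ring

lemma conv_leibniz_single (p q r : ℤ × ℤ) (α β γ : ℚ) :
    torConv (torConv (Finsupp.single p α) (Finsupp.single q β)) (Finsupp.single r γ)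
    - torConv (Finsupp.single p α) (torConv (Finsupp.single q β) (Finsupp.single r γ))
    + torConv (Finsupp.single q β) (torConv (Finsupp.single p α) (Finsupp.single r γ)) = 0 := by
  simp only [torConv_single_single]
  rw [show p + (q + r) = p + q + r by ring, show q + (p + r) = p + q + r by ring,
    ← Finsupp.single_sub, ← Finsupp.single_add]
  convert Finsupp.single_zero (p + q + r)
  · rfl
  simp only [Prod.fst_add, Prod.snd_add]
  push_cast
  ring

lemma cen_leibniz_single (p q r : ℤ × ℤ) (α β γ : ℚ) :
    torCen (torConv (Finsupp.single p α) (Finsupp.single q β)) (Finsupp.single r γ)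
    - torCen (Finsupp.single p α) (torConv (Finsupp.single q β) (Finsupp.single r γ))
    + torCen (Finsupp.single q β) (torConv (Finsupp.single p α) (Finsupp.single r γ)) = 0 := by
  simp only [torConv_single_single, torCen_single_single]
  simp only [eq_neg_iff_add_eq_zero]
  rw [show r + (p + q) = p + q + r by ring, show q + r + p = p + q + r by ring,
    show p + r + q = p + q + r by ring]
  split_ifs with h
  · have hr : r = -p - q := by linear_combination h
    subst hr
    simp only [Prod.ext_iff, Prod.fst_add, Prod.snd_add, Prod.fst_sub, Prod.snd_sub,
      Prod.fst_neg, Prod.snd_neg, Prod.mk_sub_mk, Prod.mk_add_mk, Prod.fst_zero, Prod.snd_zero]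
    constructor <;> (push_cast; ring)
  · simp [Prod.ext_iff]

lemma fin3 {M : Type*} [AddCommGroup M] (T : TorCoef → TorCoef → TorCoef → M)
    (h1 : ∀ a a' b c, T (a + a') b c = T a b c + T a' b c)
    (h2 : ∀ a b b' c, T a (b + b') c = T a b c + T a b' c)
    (h3 : ∀ a b c c', T a b (c + c') = T a b c + T a b c')
    (z1 : ∀ b c, T 0 b c = 0) (z2 : ∀ a c, T a 0 c = 0) (z3 : ∀ a b, T a b 0 = 0)
    (hs : ∀ p q r α β γ, T (Finsupp.single p α) (Finsupp.single q β) (Finsupp.single r γ) = 0)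
    (a b c : TorCoef) : T a b c = 0 := by
  have key3 : ∀ p α q β (c : TorCoef), T (Finsupp.single p α) (Finsupp.single q β) c = 0 := by
    intro p α q β c
    induction c using Finsupp.induction with
    | zero => exact z3 _ _
    | single_add r γ f _ _ ih => rw [h3, ih, add_zero, hs]
  have key2 : ∀ p α (b c : TorCoef), T (Finsupp.single p α) b c = 0 := by
    intro p α b c
    induction b using Finsupp.induction with
    | zero => exact z2 _ _
    | single_add q β f _ _ ih => rw [h2, ih, add_zero, key3]
  induction a using Finsupp.induction with
  | zero => exact z1 _ _
  | single_add p α f _ _ ih => rw [h1, ih, add_zero, key2]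

lemma conv_jacobi (a b c : TorCoef) :
    torConv (torConv a b) c + torConv (torConv b c) a + torConv (torConv c a) b = 0 :=
  fin3 (fun a b c => torConv (torConv a b) c + torConv (torConv b c) a + torConv (torConv c a) b)
    (fun a a' b c => by simp only [torConv_add_left, torConv_add_right]; abel)
    (fun a b b' c => by simp only [torConv_add_left, torConv_add_right]; abel)
    (fun a b c c' => by simp only [torConv_add_left, torConv_add_right]; abel)
    (fun b c => by simp [torConv_zero_left, torConv_zero_right])
    (fun a c => by simp [torConv_zero_left, torConv_zero_right])
    (fun a b => by simp [torConv_zero_left, torConv_zero_right])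
    (fun p q r α β γ => conv_jacobi_single p q r α β γ) a b c

lemma conv_leibniz (a b c : TorCoef) :
    torConv (torConv a b) c - torConv a (torConv b c) + torConv b (torConv a c) = 0 :=
  fin3 (fun a b c => torConv (torConv a b) c - torConv a (torConv b c) + torConv b (torConv a c))
    (fun a a' b c => by simp only [torConv_add_left, torConv_add_right]; abel)
    (fun a b b' c => by simp only [torConv_add_left, torConv_add_right]; abel)
    (fun a b c c' => by simp only [torConv_add_left, torConv_add_right]; abel)
    (fun b c => by simp [torConv_zero_left, torConv_zero_right])
    (fun a c => by simp [torConv_zero_left, torConv_zero_right])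
    (fun a b => by simp [torConv_zero_left, torConv_zero_right])
    (fun p q r α β γ => conv_leibniz_single p q r α β γ) a b c

lemma cen_leibniz (a b c : TorCoef) :
    torCen (torConv a b) c - torCen a (torConv b c) + torCen b (torConv a c) = 0 :=
  fin3 (fun a b c => torCen (torConv a b) c - torCen a (torConv b c) + torCen b (torConv a c))
    (fun a a' b c => by simp only [torConv_add_left, torConv_add_right, torCen_add_left, torCen_add_right]; abel)
    (fun a b b' c => by simp only [torConv_add_left, torConv_add_right, torCen_add_left, torCen_add_right]; abel)
    (fun a b c c' => by simp only [torConv_add_left, torConv_add_right, torCen_add_left, torCen_add_right]; abel)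
    (fun b c => by simp [torConv_zero_left, torConv_zero_right, torCen_zero_left, torCen_zero_right])
    (fun a c => by simp [torConv_zero_left, torConv_zero_right, torCen_zero_left, torCen_zero_right])
    (fun a b => by simp [torConv_zero_left, torConv_zero_right, torCen_zero_left, torCen_zero_right])
    (fun p q r α β γ => cen_leibniz_single p q r α β γ) a b c

lemma shuffle {M : Type*} [AddCommGroup M] {A B C : M} (h : A - B + C = 0) : A = B - C :=
  eq_sub_of_add_eq (sub_eq_zero.mp (by rw [← h]; abel))

/-- the bracket of the toroidal extended affine Lie algebra of `𝔤𝔩₀`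
satisfies the Jacobi identity. -/
theorem toroidal_EALA_jacobi (x y z : TorEALA) :
    torBrk (torBrk x y) z + torBrk (torBrk y z) x + torBrk (torBrk z x) y = 0 := by
  obtain ⟨x1, x2, xs, xt⟩ := x
  obtain ⟨y1, y2, ys, yt⟩ := y
  obtain ⟨z1, z2, zs, zt⟩ := z
  simp only [torBrk, torConv_sub_right, torCen_sub_right]
  refine Prod.ext ?_ (Prod.ext ?_ (Prod.ext ?_ ?_)) <;>
    simp only [Prod.fst_add, Prod.snd_add, Prod.fst_sub, Prod.snd_sub, Prod.fst_zero, Prod.snd_zero]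
  · exact conv_jacobi x1 y1 z1
  · rw [shuffle (conv_leibniz x1 y1 z2), shuffle (conv_leibniz y1 z1 x2),
      shuffle (conv_leibniz z1 x1 y2)]
    abel
  · have h1 := congrArg Prod.fst (cen_leibniz x1 y1 z2)
    have h2 := congrArg Prod.fst (cen_leibniz y1 z1 x2)
    have h3 := congrArg Prod.fst (cen_leibniz z1 x1 y2)
    simp only [Prod.fst_add, Prod.fst_sub, Prod.fst_zero] at h1 h2 h3
    linarith
  · have h1 := congrArg Prod.snd (cen_leibniz x1 y1 z2)
    have h2 := congrArg Prod.snd (cen_leibniz y1 z1 x2)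
    have h3 := congrArg Prod.snd (cen_leibniz z1 x1 y2)
    simp only [Prod.snd_add, Prod.snd_sub, Prod.snd_zero] at h1 h2 h3
    linarith
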